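/- Let γ ≥ 1/4 and b > 0 satisfy the feasibility condition b·√(γ²+2γ)/(1+γ) ≤ ln(1+γ). Then 1 − ρ(γ)·b > 0 and the quadratic convergence factor satisfies g1(γ,b) ≤ 1. -/

import Mathlib

lemma pade_hasDeriv {z : ℝ} (hz : 0 < z) :
    HasDerivAt (fun z : ℝ => z * (z + 6) / (4 * z + 6) - Real.log (1 + z))
      ((1 * (z + 6) + z * 1) * (4 * z + 6) / (4 * z + 6) ^ 2
        - z * (z + 6) * (4 * 1) / (4 * z + 6) ^ 2 - 1 / (1 + z)) z := by
  have hne : (4 * z + 6 : ℝ) ≠ 0 := by nlinarith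
  have h1z : (1 + z : ℝ) ≠ 0 := by nlinarith
  have h1 : HasDerivAt (fun z : ℝ => z * (z + 6)) (1 * (z + 6) + z * 1) z :=
    (hasDerivAt_id z).mul ((hasDerivAt_id z).add_const 6)
  have h2 : HasDerivAt (fun z : ℝ => 4 * z + 6) (4 * 1) z :=
    ((hasDerivAt_id z).const_mul 4).add_const 6
  have h3 := h1.div h2 hne
  have h4 : HasDerivAt (fun z : ℝ => Real.log (1 + z)) (1 / (1 + z)) z := by
    have := ((hasDerivAt_id z).const_add 1).log h1z
    simpa using this
  have h5 := h3.sub h4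
  exact h5.congr_deriv (by ring)

/-- Padé upper bound for log. -/
lemma log_pade {x : ℝ} (hx : 0 ≤ x) : Real.log (1 + x) ≤ x * (x + 6) / (4 * x + 6) := by
  have hmono : MonotoneOn (fun z : ℝ => z * (z + 6) / (4 * z + 6) - Real.log (1 + z))
      (Set.Ici (0:ℝ)) := by
    apply monotoneOn_of_deriv_nonneg (convex_Ici 0)
    · apply ContinuousOn.sub
      · exact (continuousOn_id.mul (continuousOn_id.add continuousOn_const)).div
          ((continuousOn_const.mul continuousOn_id).add continuousOn_const)
          (fun z hz => by have h : (0:ℝ) ≤ z := hz; nlinarith)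
      · exact Real.continuousOn_log.comp (continuousOn_const.add continuousOn_id)
          (fun z hz => by have h : (0:ℝ) ≤ z := hz; simp; nlinarith)
    · intro z hz
      rw [interior_Ici] at hz
      exact (pade_hasDeriv (Set.mem_Ioi.mp hz)).differentiableAt.differentiableWithinAt
    · intro z hz
      rw [interior_Ici] at hz
      have hz0 : (0:ℝ) < z := hz
      rw [(pade_hasDeriv hz0).deriv]
      have h1 : (0:ℝ) < 4 * z + 6 := by linarith [hz0]
      have h2 : (0:ℝ) < 1 + z := by linarith
      rw [div_sub_div _ _ (by positivity) (by positivity), sub_nonneg,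
        div_le_div_iff₀ (by positivity) (by positivity)]
      nlinarith [sq_nonneg z, mul_pos hz0 (mul_pos hz0 hz0), sq_nonneg (4*z+6)]
  have := hmono Set.self_mem_Ici hx hx
  simp only at this
  simp at this
  linarith

/-- ρ(γ) = 1/((1+γ)·√(γ²+2γ)) -/
noncomputable def rho (γ : ℝ) : ℝ := 1 / ((1 + γ) * Real.sqrt (γ ^ 2 + 2 * γ))

/-- The quadratic convergence factor g₁(γ,b). -/
noncomputable def g1 (γ b : ℝ) : ℝ :=
  (2 * γ ^ 2 + 4 * γ + 1) * b /
    (2 * (1 + γ) ^ 2 * (γ ^ 2 + 2 * γ) * Real.sqrt (γ ^ 2 + 2 * γ) *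
      (1 - b / ((1 + γ) * Real.sqrt (γ ^ 2 + 2 * γ))))

/-- For γ ≥ 1/4 and feasible b, we have 1 − ρ(γ)·b > 0 and g₁(γ,b) ≤ 1. -/
theorem stmt_3 (γ b : ℝ) (hγ : 1 / 4 ≤ γ) (hb : 0 < b)
    (hfeas : b * Real.sqrt (γ ^ 2 + 2 * γ) / (1 + γ) ≤ Real.log (1 + γ)) :
    0 < 1 - rho γ * b ∧ g1 γ b ≤ 1 := by
  have hγ0 : (0:ℝ) < γ := by linarith
  have h1γ : (0:ℝ) < 1 + γ := by linarith
  have hu : (0:ℝ) < γ ^ 2 + 2 * γ := by nlinarith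
  set s := Real.sqrt (γ ^ 2 + 2 * γ) with hs_def
  have hs : 0 < s := Real.sqrt_pos.mpr hu
  have hs2 : s ^ 2 = γ ^ 2 + 2 * γ := Real.sq_sqrt hu.le
  set L := Real.log (1 + γ) with hL_def
  have hbs : b * s ≤ (1 + γ) * L := by
    rw [div_le_iff₀ h1γ] at hfeas; linarith
  have hLγ : L ≤ γ := by
    have := Real.log_le_sub_one_of_pos h1γ
    simpa using this
  -- Part 1
  have hblt : b < (1 + γ) * s := by
    have h1 : b * s ≤ (1 + γ) * γ := le_trans hbs (by nlinarith)
    have h2 : (1 + γ) * γ < (1 + γ) * s * s := by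
      have : (1 + γ) * s * s = (1 + γ) * (γ ^ 2 + 2 * γ) := by
        rw [mul_assoc, ← sq, hs2]
      rw [this]; nlinarith
    have := lt_of_le_of_lt h1 h2
    exact lt_of_mul_lt_mul_right this hs.le
  have hden : (0:ℝ) < (1 + γ) * s := by positivity
  have hrho : rho γ * b = b / ((1 + γ) * s) := by
    rw [rho]; field_simp
    rw [hs_def]; ring_nf
  have part1 : 0 < 1 - rho γ * b := by
    rw [hrho, sub_pos, div_lt_one hden]
    exact hblt
  refine ⟨part1, ?_⟩
  -- Part 2
  have hLpade : L ≤ γ * (γ + 6) / (4 * γ + 6) := log_pade hγ0.le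
  -- key polynomial inequality: (N + 2(1+γ)u) * L ≤ 2(1+γ)u²
  have hkey : (2 * γ ^ 2 + 4 * γ + 1 + 2 * (1 + γ) * (γ ^ 2 + 2 * γ)) * L
      ≤ 2 * (1 + γ) * (γ ^ 2 + 2 * γ) ^ 2 := by
    have hA : (0:ℝ) < 2 * γ ^ 2 + 4 * γ + 1 + 2 * (1 + γ) * (γ ^ 2 + 2 * γ) := by nlinarith
    have h46 : (0:ℝ) < 4 * γ + 6 := by linarith
    have := mul_le_mul_of_nonneg_left hLpade hA.le
    refine le_trans this ?_
    have hpoly : 0 ≤ 2 * (1 + γ) * (γ ^ 2 + 2 * γ) ^ 2 * (4 * γ + 6)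
        - (2 * γ ^ 2 + 4 * γ + 1 + 2 * (1 + γ) * (γ ^ 2 + 2 * γ)) * (γ * (γ + 6)) := by
      have h14 : 0 ≤ γ - 1/4 := by linarith
      nlinarith [mul_nonneg h14 h14, mul_nonneg (mul_nonneg h14 h14) h14,
        mul_nonneg (mul_nonneg (mul_nonneg h14 h14) h14) h14,
        mul_nonneg (mul_nonneg (mul_nonneg (mul_nonneg h14 h14) h14) h14) h14,
        mul_nonneg (mul_nonneg (mul_nonneg (mul_nonneg (mul_nonneg h14 h14) h14) h14) h14) h14]
    rw [mul_div_assoc', div_le_iff₀ h46]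
    nlinarith [hpoly]
  -- from hkey and hbs : (N + 2(1+γ)u) * b ≤ 2(1+γ)²·u·s
  have hK : (2 * γ ^ 2 + 4 * γ + 1 + 2 * (1 + γ) * (γ ^ 2 + 2 * γ)) * b
      ≤ 2 * (1 + γ) ^ 2 * (γ ^ 2 + 2 * γ) * s := by
    have hA : (0:ℝ) < 2 * γ ^ 2 + 4 * γ + 1 + 2 * (1 + γ) * (γ ^ 2 + 2 * γ) := by nlinarith
    have h1 : (2 * γ ^ 2 + 4 * γ + 1 + 2 * (1 + γ) * (γ ^ 2 + 2 * γ)) * (b * s)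
        ≤ (2 * γ ^ 2 + 4 * γ + 1 + 2 * (1 + γ) * (γ ^ 2 + 2 * γ)) * ((1 + γ) * L) :=
      mul_le_mul_of_nonneg_left hbs hA.le
    have h2 : (2 * γ ^ 2 + 4 * γ + 1 + 2 * (1 + γ) * (γ ^ 2 + 2 * γ)) * ((1 + γ) * L)
        ≤ 2 * (1 + γ) ^ 2 * (γ ^ 2 + 2 * γ) ^ 2 := by
      have := mul_le_mul_of_nonneg_left hkey h1γ.le
      linarith [this]
    have h3 : (2 * γ ^ 2 + 4 * γ + 1 + 2 * (1 + γ) * (γ ^ 2 + 2 * γ)) * b * s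
        ≤ 2 * (1 + γ) ^ 2 * (γ ^ 2 + 2 * γ) * s * s := by
      have : 2 * (1 + γ) ^ 2 * (γ ^ 2 + 2 * γ) * s * s
          = 2 * (1 + γ) ^ 2 * (γ ^ 2 + 2 * γ) ^ 2 := by
        rw [mul_assoc, ← sq, hs2]; ring
      rw [this]; linarith [h1, h2]
    exact le_of_mul_le_mul_right h3 hs
  rw [g1]
  rw [div_le_one]
  · have hd : 1 - b / ((1 + γ) * s) = 1 - rho γ * b := by rw [hrho]
    rw [hd]
    have hexp : 2 * (1 + γ) ^ 2 * (γ ^ 2 + 2 * γ) * s * (1 - rho γ * b)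
        = 2 * (1 + γ) ^ 2 * (γ ^ 2 + 2 * γ) * s - 2 * (1 + γ) * (γ ^ 2 + 2 * γ) * b := by
      rw [hrho]
      field_simp
    rw [hexp]
    linarith [hK]
  · have hd : 1 - b / ((1 + γ) * s) = 1 - rho γ * b := by rw [hrho]
    rw [hd]
    positivity
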